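/- arXiv:2510.19372 — 6 statements merged into one kernel-verified Lean document; each statement's English description precedes it below -/
import Mathlib

section
/- Let S, A be finite types, m a bijective ordering of S × A with m(i) = (s_i, a_i), and u : S × A → ℝ a function such that u(m(1)) ≥ u(m(2)) ≥ ... ≥ u(m(|S||A|)) (m sorts pairs in decreasing order of u). Then for every p : A → S and every index i, if p ∈ E_i^m (i.e., p(a_j) ≠ s_j for all j < i and p(a_i) = s_i), then max_{a ∈ A} u(p(a), a) = u(s_i, a_i). -/
/-- If `m` sorts the pairs `(s,a)` in decreasing order of `u`, and `p ∈ E_i^m`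
(i.e. `p(a_j) ≠ s_j` for all `j < i` and `p(a_i) = s_i`), then
`max_{a ∈ A} u(p(a), a) = u(s_i, a_i)`. -/
theorem stmt_6 {S A : Type*} [Fintype S] [Fintype A] [Nonempty S] [Nonempty A]
    (m : Fin (Fintype.card S * Fintype.card A) ≃ S × A)
    (u : S × A → ℝ)
    (hsort : ∀ i j, i ≤ j → u (m j) ≤ u (m i))
    (p : A → S) (i : Fin (Fintype.card S * Fintype.card A))
    (hp : (∀ j, j < i → p (m j).2 ≠ (m j).1) ∧ p (m i).2 = (m i).1) :
    Finset.univ.sup' Finset.univ_nonempty (fun a => u (p a, a)) = u (m i) := by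
  apply le_antisymm
  · apply Finset.sup'_le
    intro a _
    set j := m.symm (p a, a) with hj
    have hmj : m j = (p a, a) := m.apply_symm_apply _
    have hij : i ≤ j := by
      by_contra h
      push_neg at h
      exact hp.1 j h (by rw [hmj])
    calc u (p a, a) = u (m j) := by rw [hmj]
      _ ≤ u (m i) := hsort i j hij
  · have : u (m i) = u (p (m i).2, (m i).2) := by rw [hp.2]
    rw [this]
    exact Finset.le_sup' (fun a => u (p a, a)) (Finset.mem_univ (m i).2)
end

section
/- With the notation of the sorting decomposition: for any probability mass function μ on functions p : A → S, any s ∈ S, and any u : S × A → ℝ, if m is an ordering sorting S × A in decreasing order of u, then E_{p∼μ}[max_{a ∈ A} u(p(a), a)] = ∑_i μ(E_i^m) · u(s_i, a_i), where every p lies in exactly one E_i^m. -/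
/-- Sorting decomposition of the expectation: for a pmf `μ` on `p : A → S` and `u` sorted in
decreasing order by `m`, every `p` lies in exactly one `E_i^m`, and
`E_{p∼μ}[max_a u(p(a), a)] = ∑_i μ(E_i^m)·u(s_i, a_i)`. -/
theorem stmt_7 {S A : Type*} [Fintype S] [Fintype A] [Nonempty S] [Nonempty A] [DecidableEq A]
    (μ : (A → S) → ℝ) (hμ0 : ∀ p, 0 ≤ μ p) (hμ1 : ∑ p : A → S, μ p = 1)
    (m : Fin (Fintype.card S * Fintype.card A) ≃ S × A)
    (u : S × A → ℝ) (hsort : ∀ i j, i ≤ j → u (m j) ≤ u (m i))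
    (E : Fin (Fintype.card S * Fintype.card A) → Set (A → S))
    (hE : ∀ i, E i = {p | (∀ j, j < i → p (m j).2 ≠ (m j).1) ∧ p (m i).2 = (m i).1}) :
    (∀ p : A → S, ∃! i, p ∈ E i) ∧
      ∑ p : A → S, μ p * (Finset.univ.sup' Finset.univ_nonempty fun a => u (p a, a)) =
        ∑ i, (∑ p : A → S, (E i).indicator μ p) * u (m i) := by
  classical
  have hT : ∀ p : A → S,
      (Finset.univ.filter fun i : Fin (Fintype.card S * Fintype.card A) => p (m i).2 = (m i).1).Nonempty := by
    intro p
    obtain ⟨a⟩ := ‹Nonempty A›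
    refine ⟨m.symm (p a, a), ?_⟩
    simp
  have hunique : ∀ p : A → S, ∃! i, p ∈ E i := by
    intro p
    set i₀ := (Finset.univ.filter fun i : Fin (Fintype.card S * Fintype.card A) => p (m i).2 = (m i).1).min' (hT p) with hi₀
    have hi₀mem := Finset.min'_mem _ (hT p)
    rw [Finset.mem_filter] at hi₀mem
    refine ⟨i₀, ?_, ?_⟩
    · show p ∈ E i₀
      rw [hE]
      refine ⟨?_, hi₀mem.2⟩
      intro j hj hmatch
      exact absurd (Finset.min'_le _ j (Finset.mem_filter.mpr ⟨Finset.mem_univ _, hmatch⟩))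
        (not_le.mpr hj)
    · intro i hi
      rw [hE] at hi
      by_contra hne
      rcases lt_or_gt_of_ne hne with h | h
      · exact absurd (Finset.min'_le _ i (Finset.mem_filter.mpr ⟨Finset.mem_univ _, hi.2⟩))
          (not_le.mpr h)
      · exact (hi.1 i₀ h) hi₀mem.2
  refine ⟨hunique, ?_⟩
  have hmax : ∀ (p : A → S) (i : Fin (Fintype.card S * Fintype.card A)), p ∈ E i →
      (Finset.univ.sup' Finset.univ_nonempty fun a => u (p a, a)) = u (m i) := by
    intro p i hp
    rw [hE] at hp
    apply le_antisymm
    · apply Finset.sup'_le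
      intro a _
      have h1 : (p a, a) = m (m.symm (p a, a)) := by simp
      rw [h1]
      apply hsort
      by_contra h
      push_neg at h
      have h2 := hp.1 _ h
      simp at h2
    · have h1 : (p (m i).2, (m i).2) = m i := by rw [hp.2]
      calc u (m i) = u (p (m i).2, (m i).2) := by rw [h1]
        _ ≤ _ := Finset.le_sup' (fun a => u (p a, a)) (Finset.mem_univ (m i).2)
  calc ∑ p : A → S, μ p * (Finset.univ.sup' Finset.univ_nonempty fun a => u (p a, a))
      = ∑ p : A → S, ∑ i, (E i).indicator μ p * u (m i) := by
        refine Finset.sum_congr rfl fun p _ => ?_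
        obtain ⟨i₀, hi₀, huniq⟩ := hunique p
        rw [Finset.sum_eq_single i₀]
        · rw [Set.indicator_of_mem hi₀, hmax p i₀ hi₀]
        · intro j _ hj
          rw [Set.indicator_of_notMem, zero_mul]
          intro hmem; exact hj (huniq j hmem)
        · simp
    _ = ∑ i, (∑ p : A → S, (E i).indicator μ p) * u (m i) := by
        rw [Finset.sum_comm]
        simp [Finset.sum_mul]
end

section
/- Sorted constraint dominance: Let u : S × A → ℝ, let μ be a probability mass function on functions p : A → S, and let m* be an ordering of S × A sorting pairs in decreasing order of u. Then for any other ordering m of S × A, ∑_i μ(E_i^m) · u(m(i)) ≤ ∑_i μ(E_i^{m*}) · u(m*(i)) = E_{p∼μ}[max_{a} u(p(a), a)]. In particular, the tightest constraint among all orderings is attained by m*. -/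
/-- The sets `E_i^m` for an ordering `m` of the state-action pairs. -/
def Eset {S A : Type*} [Fintype S] [Fintype A]
    (m : Fin (Fintype.card S * Fintype.card A) ≃ S × A)
    (i : Fin (Fintype.card S * Fintype.card A)) : Set (A → S) :=
  {p | (∀ j, j < i → p (m j).2 ≠ (m j).1) ∧ p (m i).2 = (m i).1}

private lemma Eset_row {S A : Type*} [Fintype S] [Fintype A] [Nonempty A] [DecidableEq A]
    (μ : (A → S) → ℝ) (u : S × A → ℝ)
    (m : Fin (Fintype.card S * Fintype.card A) ≃ S × A) (p : A → S) :
    ∃ i0 : Fin (Fintype.card S * Fintype.card A),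
      p (m i0).2 = (m i0).1 ∧
      (∀ i, p (m i).2 = (m i).1 → i0 ≤ i) ∧
      (∑ i, (Eset m i).indicator μ p * u (m i)) = μ p * u (m i0) := by
  classical
  set H : Finset (Fin (Fintype.card S * Fintype.card A)) :=
    Finset.univ.filter (fun i => p (m i).2 = (m i).1) with hH
  have hne : H.Nonempty := by
    obtain ⟨a⟩ := ‹Nonempty A›
    refine ⟨m.symm (p a, a), ?_⟩
    simp [hH]
  have hmm : p (m (H.min' hne)).2 = (m (H.min' hne)).1 := by
    have := H.min'_mem hne; simpa [hH] using this
  refine ⟨H.min' hne, hmm, ?_, ?_⟩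
  · intro i hi
    exact H.min'_le i (by simp [hH, hi])
  · have hmem : ∀ i, p ∈ Eset m i ↔ i = H.min' hne := by
      intro i
      constructor
      · rintro ⟨hmiss, hhit⟩
        have h1 : H.min' hne ≤ i := H.min'_le i (by simp [hH, hhit])
        rcases lt_or_eq_of_le h1 with h | h
        · exact absurd hmm (hmiss _ h)
        · exact h.symm
      · rintro rfl
        refine ⟨?_, hmm⟩
        intro j hj hjhit
        exact absurd (H.min'_le j (by simp [hH, hjhit])) (not_le_of_gt hj)
    rw [Finset.sum_eq_single (H.min' hne)]
    · rw [Set.indicator_of_mem ((hmem _).2 rfl)]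
    · intro i _ hi
      rw [Set.indicator_of_notMem (fun h => hi ((hmem i).1 h)), zero_mul]
    · intro h; exact absurd (Finset.mem_univ _) h

/-- Sorted constraint dominance: for any ordering `m`,
`∑_i μ(E_i^m)·u(m(i)) ≤ ∑_i μ(E_i^{m*})·u(m*(i)) = E_{p∼μ}[max_a u(p(a),a)]`,
where `m*` sorts the pairs in decreasing order of `u`. -/
theorem stmt_8 {S A : Type*} [Fintype S] [Fintype A] [Nonempty S] [Nonempty A] [DecidableEq A]
    (μ : (A → S) → ℝ) (hμ0 : ∀ p, 0 ≤ μ p) (hμ1 : ∑ p : A → S, μ p = 1)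
    (u : S × A → ℝ)
    (mstar : Fin (Fintype.card S * Fintype.card A) ≃ S × A)
    (hsort : ∀ i j, i ≤ j → u (mstar j) ≤ u (mstar i))
    (m : Fin (Fintype.card S * Fintype.card A) ≃ S × A) :
    (∑ i, (∑ p : A → S, (Eset m i).indicator μ p) * u (m i) ≤
        ∑ i, (∑ p : A → S, (Eset mstar i).indicator μ p) * u (mstar i)) ∧
      ∑ i, (∑ p : A → S, (Eset mstar i).indicator μ p) * u (mstar i) =
        ∑ p : A → S, μ p * (Finset.univ.sup' Finset.univ_nonempty fun a => u (p a, a)) := by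
  classical
  choose i0 hhit hmin hsum using
    fun (m' : Fin (Fintype.card S * Fintype.card A) ≃ S × A) (p : A → S) =>
      Eset_row μ u m' p
  have swap : ∀ (m' : Fin (Fintype.card S * Fintype.card A) ≃ S × A),
      ∑ i, (∑ p : A → S, (Eset m' i).indicator μ p) * u (m' i)
        = ∑ p : A → S, μ p * u (m' (i0 m' p)) := by
    intro m'
    simp_rw [Finset.sum_mul]
    rw [Finset.sum_comm]
    exact Finset.sum_congr rfl fun p _ => hsum m' p
  have hle : ∀ (m' : Fin (Fintype.card S * Fintype.card A) ≃ S × A) (p : A → S),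
      u (m' (i0 m' p)) ≤ Finset.univ.sup' Finset.univ_nonempty fun a => u (p a, a) := by
    intro m' p
    have h1 : m' (i0 m' p) = (p (m' (i0 m' p)).2, (m' (i0 m' p)).2) := by
      have := hhit m' p
      exact Prod.ext this.symm rfl
    rw [h1]
    exact Finset.le_sup' (fun a => u (p a, a)) (Finset.mem_univ (m' (i0 m' p)).2)
  have heq : ∀ p : A → S,
      u (mstar (i0 mstar p)) = Finset.univ.sup' Finset.univ_nonempty fun a => u (p a, a) := by
    intro p
    refine le_antisymm (hle mstar p) (Finset.sup'_le _ _ fun a _ => ?_)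
    have hj : p (mstar (mstar.symm (p a, a))).2 = (mstar (mstar.symm (p a, a))).1 := by simp
    have h2 := hsort _ _ (hmin mstar p _ hj)
    simpa using h2
  constructor
  · rw [swap m, swap mstar]
    refine Finset.sum_le_sum fun p _ => ?_
    exact mul_le_mul_of_nonneg_left ((hle m p).trans_eq (heq p).symm) (hμ0 p)
  · rw [swap mstar]
    exact Finset.sum_congr rfl fun p _ => by rw [heq p]
end

section
/- Monotonicity of look-ahead: the 1-look-ahead fixed point dominates the standard optimal value. If v* satisfies v*(s) = E_{p∼P̄(·|s)}[max_a { r(s,a) + γ v*(p(a)) }] and v satisfies the standard Bellman equation v(s) = max_a { r(s,a) + γ ∑_{s'} P(s'|s,a) v(s') }, then v*(s) ≥ v(s) for all s. -/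
open Finset

lemma marg_lookahead {S A : Type*} [Fintype S] [Fintype A] [DecidableEq A]
    (P : A → S → ℝ) (hP1 : ∀ a, ∑ s, P a s = 1) (a : A) (g : S → ℝ) :
    ∑ p : A → S, (∏ a', P a' (p a')) * g (p a) = ∑ s', P a s' * g s' := by
  rw [← Equiv.sum_comp (Equiv.funSplitAt a S).symm
      (fun p => (∏ a', P a' (p a')) * g (p a))]
  rw [Fintype.sum_prod_type]
  have key : ∀ (s' : S) (q : {j // j ≠ a} → S),
      (∏ a', P a' ((Equiv.funSplitAt a S).symm (s', q) a')) *
        g ((Equiv.funSplitAt a S).symm (s', q) a)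
      = (P a s' * g s') * ∏ j : {j // j ≠ a}, P j (q j) := by
    intro s' q
    have h1 : (Equiv.funSplitAt a S).symm (s', q) a = s' := by simp
    have h2 : ∀ j : A, ∀ h : j ≠ a,
        (Equiv.funSplitAt a S).symm (s', q) j = q ⟨j, h⟩ := by
      intro j hj; simp [Equiv.funSplitAt, Equiv.piSplitAt, hj]
    rw [Fintype.prod_eq_mul_prod_compl a, h1]
    have h3 : ∏ j ∈ {a}ᶜ, P j ((Equiv.funSplitAt a S).symm (s', q) j)
        = ∏ j : {j // j ≠ a}, P j (q j) := by
      rw [Finset.prod_subtype (p := fun j => j ≠ a) {a}ᶜ (fun x => by simp)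
        (fun j => P j ((Equiv.funSplitAt a S).symm (s', q) j))]
      exact Fintype.prod_congr _ _ fun j => by rw [h2 j j.2]
    rw [h3]; ring
  simp_rw [key]
  have hone : ∑ q : {j // j ≠ a} → S, ∏ j : {j // j ≠ a}, P j (q j) = 1 := by
    rw [← Fintype.prod_sum]
    simp [hP1]
  refine Finset.sum_congr rfl fun x _ => ?_
  rw [← Finset.mul_sum, hone, mul_one]

/-- Monotonicity of look-ahead: if `vstar` satisfies the one-step look-ahead fixed-point
equation `vstar(s) = E_{p∼P̄(·|s)}[max_a { r(s,a) + γ vstar(p(a)) }]` and `v` satisfies the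
standard Bellman equation `v(s) = max_a { r(s,a) + γ ∑_{s'} P(s'|s,a) v(s') }`, then
`vstar(s) ≥ v(s)` for all `s`. -/
theorem stmt_12 {S A : Type*} [Fintype S] [Fintype A] [Nonempty S] [Nonempty A] [DecidableEq A]
    (P : S → A → S → ℝ) (hP0 : ∀ s a s', 0 ≤ P s a s') (hP1 : ∀ s a, ∑ s', P s a s' = 1)
    (r : S → A → ℝ) (γ : ℝ) (hγ : γ ∈ Set.Ioo (0:ℝ) 1)
    (vstar v : S → ℝ)
    (hvstar : ∀ s, vstar s = ∑ p : A → S, (∏ a, P s a (p a)) *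
      (Finset.univ.sup' Finset.univ_nonempty fun a => r s a + γ * vstar (p a)))
    (hv : ∀ s, v s = Finset.univ.sup' Finset.univ_nonempty
      fun a => r s a + γ * ∑ s', P s a s' * v s') :
    ∀ s, vstar s ≥ v s := by
  obtain ⟨hγ0, hγ1⟩ := hγ
  -- Step 1: vstar dominates one Bellman step on itself
  have hge : ∀ s a, r s a + γ * ∑ s', P s a s' * vstar s' ≤ vstar s := by
    intro s a
    rw [hvstar s]
    calc r s a + γ * ∑ s', P s a s' * vstar s'
        = ∑ s', P s a s' * (r s a + γ * vstar s') := by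
          simp_rw [mul_add, Finset.sum_add_distrib, ← Finset.sum_mul, hP1 s a, one_mul,
            mul_left_comm, ← Finset.mul_sum]
      _ = ∑ p : A → S, (∏ a', P s a' (p a')) * (r s a + γ * vstar (p a)) :=
          (marg_lookahead (P s) (hP1 s) a (fun s' => r s a + γ * vstar s')).symm
      _ ≤ ∑ p : A → S, (∏ a', P s a' (p a')) *
            (Finset.univ.sup' Finset.univ_nonempty fun a' => r s a' + γ * vstar (p a')) := by
          refine Finset.sum_le_sum fun p _ => ?_
          exact mul_le_mul_of_nonneg_left
            (Finset.le_sup' (fun a' => r s a' + γ * vstar (p a')) (Finset.mem_univ a))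
            (Finset.prod_nonneg fun a' _ => hP0 s a' (p a'))
  -- Step 2: contraction argument
  set d : S → ℝ := fun s => v s - vstar s with hd
  set M : ℝ := Finset.univ.sup' Finset.univ_nonempty d with hM
  have hdM : ∀ s, d s ≤ M := fun s => Finset.le_sup' d (Finset.mem_univ s)
  obtain ⟨s0, _, hs0⟩ := Finset.exists_mem_eq_sup' Finset.univ_nonempty d
  obtain ⟨a0, _, ha0⟩ := Finset.exists_mem_eq_sup' (Finset.univ_nonempty (α := A))
    (fun a => r s0 a + γ * ∑ s', P s0 a s' * v s')
  have hv0 : v s0 = r s0 a0 + γ * ∑ s', P s0 a0 s' * v s' := by rw [hv s0, ha0]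
  have hbound : M ≤ γ * M := by
    have h1 : d s0 ≤ γ * ∑ s', P s0 a0 s' * d s' := by
      have := hge s0 a0
      have heq : ∑ s', P s0 a0 s' * d s'
          = (∑ s', P s0 a0 s' * v s') - ∑ s', P s0 a0 s' * vstar s' := by
        rw [← Finset.sum_sub_distrib]
        exact Finset.sum_congr rfl fun s' _ => by simp [hd]; ring
      simp only [hd]
      rw [heq, hv0]
      nlinarith [hge s0 a0]
    have h2 : ∑ s', P s0 a0 s' * d s' ≤ M := by
      calc ∑ s', P s0 a0 s' * d s' ≤ ∑ s', P s0 a0 s' * M :=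
            Finset.sum_le_sum fun s' _ =>
              mul_le_mul_of_nonneg_left (hdM s') (hP0 s0 a0 s')
        _ = M := by rw [← Finset.sum_mul, hP1, one_mul]
    calc M = d s0 := hs0
      _ ≤ γ * ∑ s', P s0 a0 s' * d s' := h1
      _ ≤ γ * M := by nlinarith
  have hM0 : M ≤ 0 := by nlinarith
  intro s
  have := hdM s
  simp only [hd] at this
  linarith
end

section
/- Lifting feasibility to the augmented LP: Suppose v : S → ℝ satisfies v(s) ≥ E_{p∼P̄(·|s)}[max_a { r(s,a) + γ v(p(a)) }] for all s ∈ S. Define v̄(s,p) = max_a { r(s,a) + γ v(p(a)) }. Then v̄ satisfies the augmented constraints: v̄(s,p) ≥ max_a { r(s,a) + γ E_{p'∼P̄(·|p(a))}[v̄(p(a), p')] } for all (s,p) ∈ S × S^A. -/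
/-- Lifting feasibility to the augmented LP: if `v` satisfies
`v(s) ≥ E_{p∼P̄(·|s)}[max_a { r(s,a) + γ v(p(a)) }]` for all `s`, then
`v̄(s,p) := max_a { r(s,a) + γ v(p(a)) }` satisfies the augmented constraints
`v̄(s,p) ≥ max_a { r(s,a) + γ E_{p'∼P̄(·|p(a))}[v̄(p(a),p')] }`. -/
theorem stmt_13 {S A : Type*} [Fintype S] [Fintype A] [Nonempty S] [Nonempty A] [DecidableEq A]
    (P : S → A → S → ℝ) (hP0 : ∀ s a s', 0 ≤ P s a s') (hP1 : ∀ s a, ∑ s', P s a s' = 1)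
    (r : S → A → ℝ) (γ : ℝ) (hγ : γ ∈ Set.Ioo (0:ℝ) 1)
    (v : S → ℝ)
    (hv : ∀ s, v s ≥ ∑ p : A → S, (∏ a, P s a (p a)) *
      (Finset.univ.sup' Finset.univ_nonempty fun a => r s a + γ * v (p a)))
    (vbar : S → (A → S) → ℝ)
    (hvbar : ∀ s (p : A → S), vbar s p =
      Finset.univ.sup' Finset.univ_nonempty fun a => r s a + γ * v (p a)) :
    ∀ s (p : A → S), vbar s p ≥ Finset.univ.sup' Finset.univ_nonempty
      fun a => r s a + γ * ∑ p' : A → S, (∏ a', P (p a) a' (p' a')) * vbar (p a) p' := by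
  intro s p
  rw [hvbar, ge_iff_le]
  apply Finset.sup'_le
  intro a _
  have h1 : ∑ p' : A → S, (∏ a', P (p a) a' (p' a')) * vbar (p a) p' ≤ v (p a) := by
    simp only [hvbar]
    exact hv (p a)
  calc r s a + γ * ∑ p' : A → S, (∏ a', P (p a) a' (p' a')) * vbar (p a) p'
      ≤ r s a + γ * v (p a) := by
        exact add_le_add_right (mul_le_mul_of_nonneg_left h1 hγ.1.le) _
    _ ≤ _ := Finset.le_sup' (fun a => r s a + γ * v (p a)) (Finset.mem_univ a)
end

section
/- Lifting feasibility in the average-reward LP: Suppose (g, h) with g ∈ ℝ and h : S → ℝ satisfies g + h(s) ≥ E_{p∼P̄(·|s)}[max_a { r(s,a) + h(p(a)) }] for all s. Define h̄(s,p) = max_a { r(s,a) + h(p(a)) } − g. Then g + h̄(s,p) ≥ max_a { r(s,a) + E_{p'∼P̄(·|p(a))}[h̄(p(a), p')] } for all (s,p) ∈ S × S^A. -/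
/-- Lifting feasibility in the average-reward LP: if `(g, h)` satisfies
`g + h(s) ≥ E_{p∼P̄(·|s)}[max_a { r(s,a) + h(p(a)) }]` for all `s`, then
`h̄(s,p) := max_a { r(s,a) + h(p(a)) } − g` satisfies
`g + h̄(s,p) ≥ max_a { r(s,a) + E_{p'∼P̄(·|p(a))}[h̄(p(a),p')] }` for all `(s,p)`. -/
theorem stmt_14 {S A : Type*} [Fintype S] [Fintype A] [Nonempty S] [Nonempty A] [DecidableEq A]
    (P : S → A → S → ℝ) (hP0 : ∀ s a s', 0 ≤ P s a s') (hP1 : ∀ s a, ∑ s', P s a s' = 1)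
    (r : S → A → ℝ) (g : ℝ) (h : S → ℝ)
    (hgh : ∀ s, g + h s ≥ ∑ p : A → S, (∏ a, P s a (p a)) *
      (Finset.univ.sup' Finset.univ_nonempty fun a => r s a + h (p a)))
    (hbar : S → (A → S) → ℝ)
    (hhbar : ∀ s (p : A → S), hbar s p =
      (Finset.univ.sup' Finset.univ_nonempty fun a => r s a + h (p a)) - g) :
    ∀ s (p : A → S), g + hbar s p ≥ Finset.univ.sup' Finset.univ_nonempty
      fun a => r s a + ∑ p' : A → S, (∏ a', P (p a) a' (p' a')) * hbar (p a) p' := by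
  intro s p
  have hsum1 : ∀ t : S, ∑ p' : A → S, (∏ a', P t a' (p' a')) = 1 := by
    intro t
    have := Finset.prod_univ_sum (fun _ : A => (Finset.univ : Finset S))
      (fun a s' => P t a s')
    simp only [hP1, Finset.prod_const_one] at this
    rw [Fintype.piFinset_univ] at this; exact this.symm
  rw [hhbar s p]
  rw [ge_iff_le, Finset.sup'_le_iff]
  intro a _
  have key : ∑ p' : A → S, (∏ a', P (p a) a' (p' a')) * hbar (p a) p' ≤ h (p a) := by
    have : ∑ p' : A → S, (∏ a', P (p a) a' (p' a')) * hbar (p a) p'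
        = (∑ p' : A → S, (∏ a', P (p a) a' (p' a')) *
          (Finset.univ.sup' Finset.univ_nonempty fun a' => r (p a) a' + h (p' a'))) - g := by
      rw [eq_sub_iff_add_eq]
      have : g = ∑ p' : A → S, (∏ a', P (p a) a' (p' a')) * g := by
        rw [← Finset.sum_mul, hsum1, one_mul]
      rw [this]
      rw [← Finset.sum_add_distrib]
      congr 1; ext p'
      rw [hhbar]; ring
    rw [this]
    have := hgh (p a)
    linarith
  have : r s a + h (p a) ≤ Finset.univ.sup' Finset.univ_nonempty fun a' => r s a' + h (p a') :=
    Finset.le_sup' (fun a' => r s a' + h (p a')) (Finset.mem_univ a)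
  linarith
end
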